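/- arXiv:1503.00019 — 4 statements merged into one kernel-verified Lean document; each statement's English description precedes it below -/
import Mathlib

section
/- Fix constants b > 0 and M > 0 and define p(y) = b·M·e^{b/y} / ((e^{b/y} - 1)²·y²) for y > 0. Then p is strictly increasing on (0, ∞) and tends to M/b as y → ∞. -/
open Real Filter Set

lemma sinh_lt_mul_cosh {x : ℝ} (hx : 0 < x) : Real.sinh x < x * Real.cosh x := by
  have h : StrictMonoOn (fun x => x * Real.cosh x - Real.sinh x) (Set.Ici (0:ℝ)) := by
    apply strictMonoOn_of_deriv_pos (convex_Ici 0)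
    · exact (continuous_id.mul Real.continuous_cosh).sub Real.continuous_sinh |>.continuousOn
    · intro x hx
      rw [interior_Ici] at hx
      have hd : HasDerivAt (fun x => x * Real.cosh x - Real.sinh x) (x * Real.sinh x) x := by
        have : HasDerivAt (fun x => x * Real.cosh x - Real.sinh x)
            (1 * Real.cosh x + x * Real.sinh x - Real.cosh x) x := ((hasDerivAt_id x).mul (Real.hasDerivAt_cosh x)).sub (Real.hasDerivAt_sinh x)
        convert this using 1
        ring
      rw [hd.deriv]
      exact mul_pos hx (Real.sinh_pos_iff.2 hx)
  have := h (Set.self_mem_Ici) (Set.mem_Ici.2 hx.le) hx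
  simpa using this

lemma sinh_div_strictMonoOn : StrictMonoOn (fun x => Real.sinh x / x) (Set.Ioi (0:ℝ)) := by
  apply strictMonoOn_of_deriv_pos (convex_Ioi 0)
  · apply ContinuousOn.div Real.continuous_sinh.continuousOn continuousOn_id
    intro x hx; exact ne_of_gt hx
  · intro x hx
    rw [interior_Ioi] at hx
    have hx0 : x ≠ 0 := ne_of_gt hx
    have hd : HasDerivAt (fun x => Real.sinh x / x)
        ((Real.cosh x * x - Real.sinh x * 1) / x ^ 2) x :=
      (Real.hasDerivAt_sinh x).div (hasDerivAt_id x) hx0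
    rw [hd.deriv]
    apply div_pos
    · have := sinh_lt_mul_cosh hx
      nlinarith
    · positivity

theorem p_strictMono_and_tendsto (b M : ℝ) (hb : 0 < b) (hM : 0 < M)
    (p : ℝ → ℝ)
    (hp : ∀ y : ℝ, 0 < y →
      p y = b * M * Real.exp (b / y) / ((Real.exp (b / y) - 1) ^ 2 * y ^ 2)) :
    StrictMonoOn p (Set.Ioi (0 : ℝ)) ∧
      Filter.Tendsto p Filter.atTop (nhds (M / b)) := by
  -- rewrite p in terms of sinh
  have key : ∀ y : ℝ, 0 < y →
      p y = (M / b) / (Real.sinh (b / (2 * y)) / (b / (2 * y))) ^ 2 := by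
    intro y hy
    have hy0 : y ≠ 0 := ne_of_gt hy
    have hu : 0 < b / (2 * y) := by positivity
    have h1 : Real.exp (b / (2 * y)) * Real.exp (b / (2 * y)) = Real.exp (b / y) := by
      rw [← Real.exp_add]; congr 1; field_simp; ring
    have h2 : Real.exp (b / (2 * y)) * Real.exp (-(b / (2 * y))) = 1 := by
      rw [← Real.exp_add]; simp
    have hexp : Real.exp (b / y) - 1 =
        2 * Real.exp (b / (2 * y)) * Real.sinh (b / (2 * y)) := by
      rw [Real.sinh_eq]
      linear_combination h2 - h1
    rw [hp y hy, hexp]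
    have hs : Real.sinh (b / (2 * y)) ≠ 0 := ne_of_gt (Real.sinh_pos_iff.2 hu)
    have he : Real.exp (b / (2 * y)) ≠ 0 := Real.exp_ne_zero _
    have he2 : Real.exp (b / y) = Real.exp (b / (2 * y)) ^ 2 := by
      rw [sq]; exact h1.symm
    rw [he2]
    field_simp
  have hspos : ∀ y : ℝ, 0 < y → 0 < Real.sinh (b / (2 * y)) / (b / (2 * y)) := by
    intro y hy
    have hu : 0 < b / (2 * y) := by positivity
    exact div_pos (Real.sinh_pos_iff.2 hu) hu
  constructor
  · intro y1 h1 y2 h2 hlt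
    rw [Set.mem_Ioi] at h1 h2
    rw [key y1 h1, key y2 h2]
    have hu1 : 0 < b / (2 * y1) := by positivity
    have hu2 : 0 < b / (2 * y2) := by positivity
    have hu21 : b / (2 * y2) < b / (2 * y1) := by
      apply div_lt_div_of_pos_left hb (by positivity)
      linarith
    have hmono := sinh_div_strictMonoOn (Set.mem_Ioi.2 hu2) (Set.mem_Ioi.2 hu1) hu21
    have hs2 := hspos y2 h2
    have hs1 := hspos y1 h1
    apply div_lt_div_of_pos_left (by positivity)
    · positivity
    · have : Real.sinh (b / (2 * y2)) / (b / (2 * y2)) <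
          Real.sinh (b / (2 * y1)) / (b / (2 * y1)) := hmono
      nlinarith
  · -- limit
    have hslope : Filter.Tendsto (fun x : ℝ => Real.sinh x / x) (nhdsWithin 0 {(0:ℝ)}ᶜ)
        (nhds 1) := by
      have h := (Real.hasDerivAt_sinh 0)
      rw [hasDerivAt_iff_tendsto_slope] at h
      rw [Real.cosh_zero] at h
      apply h.congr'
      filter_upwards [self_mem_nhdsWithin] with x hx
      simp [slope, Real.sinh_zero, div_eq_inv_mul]
    have harg : Filter.Tendsto (fun y : ℝ => b / (2 * y)) Filter.atTop
        (nhdsWithin 0 {(0:ℝ)}ᶜ) := by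
      apply tendsto_nhdsWithin_of_tendsto_nhds_of_eventually_within
      · have h2y : Filter.Tendsto (fun y : ℝ => 2 * y) Filter.atTop Filter.atTop :=
          Filter.tendsto_id.const_mul_atTop (by norm_num : (0:ℝ) < 2)
        exact Filter.Tendsto.div_atTop tendsto_const_nhds h2y
      · filter_upwards [Filter.eventually_gt_atTop 0] with y hy
        have : 0 < b / (2 * y) := by positivity
        exact ne_of_gt this
    have hcomp : Filter.Tendsto (fun y : ℝ => Real.sinh (b / (2 * y)) / (b / (2 * y)))
        Filter.atTop (nhds 1) := hslope.comp harg
    have : Filter.Tendsto (fun y : ℝ => (M / b) / (Real.sinh (b / (2 * y)) / (b / (2 * y))) ^ 2)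
        Filter.atTop (nhds (M / b)) := by
      have := (hcomp.pow 2)
      have h2 : Filter.Tendsto (fun y : ℝ => (M / b) / (Real.sinh (b / (2 * y)) / (b / (2 * y))) ^ 2)
          Filter.atTop (nhds ((M / b) / 1 ^ 2)) := Filter.Tendsto.div tendsto_const_nhds this (by norm_num)
      simpa using h2
    apply this.congr'
    filter_upwards [Filter.eventually_gt_atTop 0] with y hy
    exact (key y hy).symm
end

section
/- Let ν be a Lévy measure satisfying the exponential moment conditions ∫_{y>1} e^{(α+a)y} dν < ∞ and ∫_{y<-1} e^{(α-a)y} dν < ∞, let σ ≥ 0, r ∈ ℝ, and define the risk-neutral characteristic exponent Ψ(z) = (r - σ²/2)z + σ²z²/2 + ∫_{ℝ\{0}} (e^{zy} - 1 - (e^y - 1)z) dν(y). Then for all real ω, Re Ψ(α - iω) ≤ Ψ(α) - σ²ω²/2. -/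
open MeasureTheory Complex

-- global Taylor-type bound
lemma taylor_bound (w : ℂ) :
    ‖Complex.exp w - 1 - w‖ ≤ 3 * ‖w‖ ^ 2 * Real.exp (‖w‖) := by
  rcases le_or_gt (‖w‖) 1 with h | h
  · have h1 := Complex.norm_exp_sub_one_sub_id_le h
    nlinarith [Real.one_le_exp (norm_nonneg w), sq_nonneg (‖w‖),
      norm_nonneg w]
  · have hx : (1:ℝ) ≤ ‖w‖ := h.le
    have he : Real.exp w.re ≤ Real.exp (‖w‖) :=
      Real.exp_le_exp.mpr (Complex.re_le_norm w)
    have h1 : ‖Complex.exp w - 1 - w‖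
        ≤ Real.exp (‖w‖) + 1 + ‖w‖ := by
      calc ‖Complex.exp w - 1 - w‖
          ≤ ‖Complex.exp w - 1‖ + ‖w‖ :=
            norm_sub_le (Complex.exp w - 1) w
        _ ≤ ‖Complex.exp w‖ + 1 + ‖w‖ := by
            have := norm_sub_le (Complex.exp w) 1
            simpa using this
        _ = Real.exp w.re + 1 + ‖w‖ := by rw [Complex.norm_exp]
        _ ≤ Real.exp (‖w‖) + 1 + ‖w‖ := by linarith
    have hee : (1:ℝ) ≤ Real.exp (‖w‖) := Real.one_le_exp (norm_nonneg w)
    nlinarith [sq_nonneg (‖w‖ - 1)]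

lemma meas_ne_top (ν : Measure ℝ) (hν : ∫⁻ y, ENNReal.ofReal (min (y ^ 2) 1) ∂ν ≠ ⊤)
    {c : ℝ} (hc : 0 < c) {T : Set ℝ} (hTm : MeasurableSet T)
    (hT : ∀ y ∈ T, c ≤ min (y ^ 2) 1) : ν T ≠ ⊤ := by
  intro htop
  have h1 : ∫⁻ y in T, ENNReal.ofReal c ∂ν ≤ ∫⁻ y, ENNReal.ofReal (min (y ^ 2) 1) ∂ν := by
    refine le_trans (setLIntegral_mono' hTm fun y hy => ENNReal.ofReal_le_ofReal (hT y hy)) ?_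
    exact setLIntegral_le_lintegral T _
  rw [setLIntegral_const, htop, ENNReal.mul_top (by simp [hc])] at h1
  exact hν (top_le_iff.mp h1)

lemma integrable_min (ν : Measure ℝ)
    (hν : ∫⁻ y, ENNReal.ofReal (min (y ^ 2) 1) ∂ν ≠ ⊤) :
    Integrable (fun y : ℝ => min (y ^ 2) 1) ν := by
  refine ⟨(Continuous.min (by continuity) continuous_const).aestronglyMeasurable, ?_⟩
  rw [hasFiniteIntegral_iff_ofReal (Filter.Eventually.of_forall fun y => le_min (sq_nonneg y) one_pos.le)]
  exact lt_top_iff_ne_top.mpr hν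

lemma int_U1 (ν : Measure ℝ) (hν : ∫⁻ y, ENNReal.ofReal (min (y ^ 2) 1) ∂ν ≠ ⊤) (z : ℂ) :
    IntegrableOn (fun y : ℝ => Complex.exp (z * y) - 1 - (Complex.exp y - 1) * z)
      {y : ℝ | |y| ≤ 1} ν := by
  set x := ‖z‖ with hx
  have hx0 : 0 ≤ x := norm_nonneg z
  refine Integrable.mono' (((integrable_min ν hν).restrict).const_mul
    (3 * (x ^ 2 + x) * Real.exp (x + 1))) ?_ ?_
  · have hc : Continuous fun y : ℝ => Complex.exp (z * y) - 1 - (Complex.exp y - 1) * z := by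
      fun_prop
    exact hc.aestronglyMeasurable
  · refine (ae_restrict_mem (measurableSet_le (by fun_prop) (by fun_prop))).mono fun y hy => ?_
    have hy1 : |y| ≤ 1 := hy
    have hy0 : (0:ℝ) ≤ |y| := abs_nonneg y
    have hy2 : y ^ 2 ≤ 1 := by nlinarith [_root_.sq_abs y]
    have hmin : min (y ^ 2) 1 = y ^ 2 := min_eq_left hy2
    have heq : Complex.exp (z * y) - 1 - (Complex.exp y - 1) * z
        = (Complex.exp (z * y) - 1 - z * y) - z * (Complex.exp y - 1 - y) := by ring
    have t1 := taylor_bound (z * (y:ℂ))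
    have t2 := taylor_bound ((y:ℂ))
    have habs : ‖z * (y:ℂ)‖ = x * |y| := by
      rw [norm_mul, Complex.norm_real, Real.norm_eq_abs]
    have haby : ‖(y:ℂ)‖ = |y| := Complex.norm_real y
    rw [habs] at t1
    rw [haby] at t2
    have e1 : Real.exp (x * |y|) ≤ Real.exp (x + 1) := by
      apply Real.exp_le_exp.mpr; nlinarith
    have e2 : Real.exp |y| ≤ Real.exp (x + 1) := by
      apply Real.exp_le_exp.mpr; nlinarith
    have he : (0:ℝ) < Real.exp (x + 1) := Real.exp_pos _
    have he1 : (0:ℝ) ≤ Real.exp (x * |y|) := (Real.exp_pos _).le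
    have he2 : (0:ℝ) ≤ Real.exp |y| := (Real.exp_pos _).le
    calc ‖Complex.exp (z * y) - 1 - (Complex.exp y - 1) * z‖
        ≤ ‖Complex.exp (z * y) - 1 - z * y‖
          + x * ‖Complex.exp y - 1 - y‖ := by
          rw [heq]
          refine le_trans (norm_sub_le _ _) ?_
          rw [norm_mul]
      _ ≤ 3 * (x * |y|) ^ 2 * Real.exp (x * |y|) + x * (3 * |y| ^ 2 * Real.exp |y|) := by
          have := mul_le_mul_of_nonneg_left t2 hx0
          linarith
      _ ≤ 3 * (x ^ 2 + x) * Real.exp (x + 1) * min (y ^ 2) 1 := by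
          rw [hmin]
          have hyy : y ^ 2 = |y| ^ 2 := (_root_.sq_abs y).symm
          rw [hyy]
          nlinarith [mul_le_mul_of_nonneg_left e1 (mul_nonneg (by positivity) (sq_nonneg |y|) :
              (0:ℝ) ≤ 3 * x ^ 2 * |y| ^ 2),
            mul_le_mul_of_nonneg_left e2 (mul_nonneg (by positivity) (sq_nonneg |y|) :
              (0:ℝ) ≤ 3 * x * |y| ^ 2)]

lemma int_U2 (ν : Measure ℝ) (α a : ℝ) (ha : 0 < a)
    (hν : ∫⁻ y, ENNReal.ofReal (min (y ^ 2) 1) ∂ν ≠ ⊤)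
    (hminus : IntegrableOn (fun y : ℝ => Real.exp ((α - a) * y)) {y : ℝ | y < -1} ν)
    (z : ℂ) (hz : z.re = α) :
    IntegrableOn (fun y : ℝ => Complex.exp (z * y) - 1 - (Complex.exp y - 1) * z)
      {y : ℝ | y < -1} ν := by
  set x := ‖z‖ with hx
  have hx0 : 0 ≤ x := norm_nonneg z
  have hfin : ν {y : ℝ | y < -1} ≠ ⊤ := by
    refine meas_ne_top ν hν one_pos (measurableSet_lt (by fun_prop) (by fun_prop)) ?_
    intro y hy
    have : (1:ℝ) ≤ y ^ 2 := by nlinarith [Set.mem_setOf_eq ▸ hy]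
    simp [this]
  have hconst : IntegrableOn (fun _ : ℝ => (1 + 2 * x)) {y : ℝ | y < -1} ν :=
    integrableOn_const hfin
  refine Integrable.mono' (hminus.add hconst) ?_ ?_
  · have hc : Continuous fun y : ℝ => Complex.exp (z * y) - 1 - (Complex.exp y - 1) * z := by
      fun_prop
    exact hc.aestronglyMeasurable
  · refine (ae_restrict_mem (measurableSet_lt (by fun_prop) (by fun_prop))).mono fun y hy => ?_
    have hy1 : y < -1 := hy
    have h1 : ‖Complex.exp (z * y)‖ = Real.exp (α * y) := by
      rw [Complex.norm_exp]
      congr 1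
      simp [Complex.mul_re, hz]
    have h2 : Real.exp (α * y) ≤ Real.exp ((α - a) * y) := by
      apply Real.exp_le_exp.mpr; nlinarith
    have h3 : ‖Complex.exp ((y:ℂ))‖ = Real.exp y := by
      rw [Complex.norm_exp]; simp
    have h4 : Real.exp y ≤ 1 := Real.exp_le_one_iff.mpr (by linarith)
    calc ‖Complex.exp (z * y) - 1 - (Complex.exp y - 1) * z‖
        ≤ ‖Complex.exp (z * y) - 1‖ + ‖Complex.exp (y:ℂ) - 1‖ * x := by
          refine le_trans (norm_sub_le _ _) ?_
          rw [norm_mul]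
      _ ≤ (‖Complex.exp (z * y)‖ + 1) + (‖Complex.exp ((y:ℂ))‖ + 1) * x := by
          have a1 := norm_sub_le (Complex.exp (z * y)) 1
          have a2 := norm_sub_le (Complex.exp ((y:ℂ))) 1
          simp only [norm_one] at a1 a2
          nlinarith
      _ ≤ Real.exp ((α - a) * y) + (1 + 2 * x) := by
          rw [h1, h3]
          nlinarith

lemma int_p1 (ν : Measure ℝ) (α a : ℝ) (ha : 0 < a)
    (hν : ∫⁻ y, ENNReal.ofReal (min (y ^ 2) 1) ∂ν ≠ ⊤)
    (hplus : IntegrableOn (fun y : ℝ => Real.exp ((α + a) * y)) {y : ℝ | 1 < y} ν)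
    (z : ℂ) (hz : z.re = α) :
    IntegrableOn (fun y : ℝ => Complex.exp (z * y) - 1 + z) {y : ℝ | 1 < y} ν := by
  set x := ‖z‖ with hx
  have hx0 : 0 ≤ x := norm_nonneg z
  have hfin : ν {y : ℝ | 1 < y} ≠ ⊤ := by
    refine meas_ne_top ν hν one_pos (measurableSet_lt (by fun_prop) (by fun_prop)) ?_
    intro y hy
    have : (1:ℝ) ≤ y ^ 2 := by nlinarith [Set.mem_setOf_eq ▸ hy]
    simp [this]
  have hconst : IntegrableOn (fun _ : ℝ => (1 + x)) {y : ℝ | 1 < y} ν :=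
    integrableOn_const hfin
  refine Integrable.mono' (hplus.add hconst) ?_ ?_
  · have hc : Continuous fun y : ℝ => Complex.exp (z * y) - 1 + z := by fun_prop
    exact hc.aestronglyMeasurable
  · refine (ae_restrict_mem (measurableSet_lt (by fun_prop) (by fun_prop))).mono fun y hy => ?_
    have hy1 : (1:ℝ) < y := hy
    have h1 : ‖Complex.exp (z * y)‖ = Real.exp (α * y) := by
      rw [Complex.norm_exp]
      congr 1
      simp [Complex.mul_re, hz]
    have h2 : Real.exp (α * y) ≤ Real.exp ((α + a) * y) := by
      apply Real.exp_le_exp.mpr; nlinarith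
    calc ‖Complex.exp (z * y) - 1 + z‖
        ≤ ‖Complex.exp (z * y) - 1‖ + x := by
          exact norm_add_le _ _
      _ ≤ (‖Complex.exp (z * y)‖ + 1) + x := by
          have a1 := norm_sub_le (Complex.exp (z * y)) 1
          simp only [norm_one] at a1
          linarith
      _ ≤ Real.exp ((α + a) * y) + (1 + x) := by
          rw [h1]; linarith

lemma key_iff (ν : Measure ℝ) (α a : ℝ) (ha : 0 < a)
    (hν : ∫⁻ y, ENNReal.ofReal (min (y ^ 2) 1) ∂ν ≠ ⊤)
    (hplus : IntegrableOn (fun y : ℝ => Real.exp ((α + a) * y)) {y : ℝ | 1 < y} ν)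
    (hminus : IntegrableOn (fun y : ℝ => Real.exp ((α - a) * y)) {y : ℝ | y < -1} ν)
    (z : ℂ) (hz : z.re = α) :
    IntegrableOn (fun y : ℝ => Complex.exp (z * y) - 1 - (Complex.exp y - 1) * z)
      {y : ℝ | y ≠ 0} ν ↔
    (z = 0 ∨ IntegrableOn (fun y : ℝ => Complex.exp ((y : ℂ))) {y : ℝ | 1 < y} ν) := by
  have hp1 := int_p1 ν α a ha hν hplus z hz
  constructor
  · intro hI
    by_cases hz0 : z = 0
    · exact Or.inl hz0
    right
    have h3 : IntegrableOn (fun y : ℝ => Complex.exp (z * y) - 1 - (Complex.exp y - 1) * z)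
        {y : ℝ | 1 < y} ν := hI.mono_set (fun y hy => by
      simp only [Set.mem_setOf_eq] at *; linarith [hy])
    have h4 : IntegrableOn (fun y : ℝ => z * Complex.exp ((y:ℂ))) {y : ℝ | 1 < y} ν := by
      have h5 : IntegrableOn (fun y : ℝ => (Complex.exp (z * y) - 1 + z)
          - (Complex.exp (z * y) - 1 - (Complex.exp y - 1) * z)) {y : ℝ | 1 < y} ν := hp1.sub h3
      have heq : (fun y : ℝ => (Complex.exp (z * y) - 1 + z)
          - (Complex.exp (z * y) - 1 - (Complex.exp y - 1) * z))
          = fun y : ℝ => z * Complex.exp ((y:ℂ)) := funext fun y => by ring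
      rwa [heq] at h5
    have h6 := h4.const_mul z⁻¹
    have heq2 : (fun y : ℝ => z⁻¹ * (z * Complex.exp ((y:ℂ))))
        = fun y : ℝ => Complex.exp ((y:ℂ)) := funext fun y => by
      field_simp
    rwa [heq2] at h6
  · intro h
    rcases h with hz0 | hE
    · subst hz0
      have heq : (fun y : ℝ => Complex.exp ((0:ℂ) * y) - 1 - (Complex.exp y - 1) * 0)
          = fun _ : ℝ => (0:ℂ) := funext fun y => by simp
      rw [heq]
      exact integrableOn_zero
    · have h1 := (int_U1 ν hν z).mono_set
        (Set.inter_subset_right : {y : ℝ | y ≠ 0} ∩ {y : ℝ | |y| ≤ 1} ⊆ {y : ℝ | |y| ≤ 1})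
      have h2 := int_U2 ν α a ha hν hminus z hz
      have h3 : IntegrableOn (fun y : ℝ => Complex.exp (z * y) - 1 - (Complex.exp y - 1) * z)
          {y : ℝ | 1 < y} ν := by
        have h5 : IntegrableOn (fun y : ℝ => (Complex.exp (z * y) - 1 + z)
            - z * Complex.exp ((y:ℂ))) {y : ℝ | 1 < y} ν := hp1.sub (hE.const_mul z)
        have heq : (fun y : ℝ => (Complex.exp (z * y) - 1 + z) - z * Complex.exp ((y:ℂ)))
            = fun y : ℝ => Complex.exp (z * y) - 1 - (Complex.exp y - 1) * z :=
          funext fun y => by ring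
        rwa [heq] at h5
      have hun := (h1.union (h2.union h3))
      refine hun.mono_set fun y hy => ?_
      simp only [Set.mem_union, Set.mem_inter_iff, Set.mem_setOf_eq] at *
      rcases le_or_gt |y| 1 with hb | hb
      · exact Or.inl ⟨hy, hb⟩
      · rcases lt_abs.mp hb with h | h
        · exact Or.inr (Or.inr h)
        · exact Or.inr (Or.inl (by linarith))

lemma re_le_pointwise (α : ℝ) (z : ℂ) (hz : z.re = α) (y : ℝ) :
    (Complex.exp (z * y) - 1 - (Complex.exp y - 1) * z).re ≤
    (Complex.exp ((α:ℂ) * y) - 1 - (Complex.exp y - 1) * (α:ℂ)).re := by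
  have h1 : (Complex.exp (z * y)).re ≤ Real.exp (α * y) := by
    calc (Complex.exp (z * y)).re ≤ ‖Complex.exp (z * y)‖ := Complex.re_le_norm _
      _ = Real.exp ((z * (y:ℂ)).re) := Complex.norm_exp _
      _ = Real.exp (α * y) := by simp [Complex.mul_re, hz]
  have h2 : Complex.exp ((α:ℂ) * y) = ((Real.exp (α * y) : ℝ) : ℂ) := by
    rw [← Complex.ofReal_mul, Complex.ofReal_exp]
  have h3 : Complex.exp ((y:ℂ)) = ((Real.exp y : ℝ) : ℂ) := (Complex.ofReal_exp y).symm
  rw [h2, h3]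
  simp only [Complex.sub_re, Complex.mul_re, Complex.one_re, Complex.one_im, Complex.sub_im,
    Complex.ofReal_re, Complex.ofReal_im, hz]
  simp
  linarith

theorem re_charExponent_bound (ν : Measure ℝ) (α a σ r : ℝ) (ha : 0 < a) (hσ : 0 ≤ σ)
    (hν : ∫⁻ y, ENNReal.ofReal (min (y ^ 2) 1) ∂ν ≠ ⊤)
    (hplus : IntegrableOn (fun y : ℝ => Real.exp ((α + a) * y)) {y : ℝ | 1 < y} ν)
    (hminus : IntegrableOn (fun y : ℝ => Real.exp ((α - a) * y)) {y : ℝ | y < -1} ν)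
    (Ψ : ℂ → ℂ)
    (hΨ : ∀ z : ℂ, Ψ z = ((r : ℂ) - (σ : ℂ) ^ 2 / 2) * z + (σ : ℂ) ^ 2 * z ^ 2 / 2 +
      ∫ y in {y : ℝ | y ≠ 0},
        (Complex.exp (z * (y : ℂ)) - 1 - (Complex.exp (y : ℂ) - 1) * z) ∂ν) :
    ∀ ω : ℝ, (Ψ ((α : ℂ) - Complex.I * (ω : ℂ))).re ≤
      (Ψ (α : ℂ)).re - σ ^ 2 * ω ^ 2 / 2 := by
  intro ω
  set z : ℂ := (α : ℂ) - Complex.I * (ω : ℂ) with hzdef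
  have hz : z.re = α := by simp [hzdef]
  have hiff1 := key_iff ν α a ha hν hplus hminus z hz
  have hiff2 := key_iff ν α a ha hν hplus hminus (α : ℂ) (Complex.ofReal_re α)
  have hmono : (∫ y in {y : ℝ | y ≠ 0},
        (Complex.exp (z * (y : ℂ)) - 1 - (Complex.exp (y : ℂ) - 1) * z) ∂ν).re ≤
      (∫ y in {y : ℝ | y ≠ 0},
        (Complex.exp ((α:ℂ) * (y : ℂ)) - 1 - (Complex.exp (y : ℂ) - 1) * (α:ℂ)) ∂ν).re := by
    by_cases hI : IntegrableOn
        (fun y : ℝ => Complex.exp (z * y) - 1 - (Complex.exp y - 1) * z) {y : ℝ | y ≠ 0} ν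
    · rcases hiff1.mp hI with hz0 | hE
      · have hα : (α : ℂ) = z := by
          rw [hz0]
          have : α = (0:ℝ) := by rw [← hz, hz0]; rfl
          rw [this]; simp
        rw [hα]
      · have hIα := hiff2.mpr (Or.inr hE)
        have e1 := integral_re hI
        have e2 := integral_re hIα
        simp only [RCLike.re_eq_complex_re] at e1 e2
        rw [← e1, ← e2]
        refine integral_mono hI.re hIα.re fun y => ?_
        simpa using re_le_pointwise α z hz y
    · rw [integral_undef hI]
      by_cases hIα : IntegrableOn
          (fun y : ℝ => Complex.exp ((α:ℂ) * y) - 1 - (Complex.exp y - 1) * (α:ℂ))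
          {y : ℝ | y ≠ 0} ν
      · rcases hiff2.mp hIα with hα0 | hE
        · rw [show (fun y : ℝ => Complex.exp ((α:ℂ) * y) - 1 - (Complex.exp y - 1) * (α:ℂ))
              = fun _ : ℝ => (0:ℂ) from funext fun y => by rw [hα0]; simp]
          simp
        · exact absurd (hiff1.mpr (Or.inr hE)) hI
      · rw [integral_undef hIα]
  rw [hΨ z, hΨ ((α : ℂ))]
  simp only [Complex.add_re]
  have hlin : (((r : ℂ) - (σ : ℂ) ^ 2 / 2) * z).re + ((σ : ℂ) ^ 2 * z ^ 2 / 2).re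
      = (((r : ℂ) - (σ : ℂ) ^ 2 / 2) * (α:ℂ)).re + ((σ : ℂ) ^ 2 * (α:ℂ) ^ 2 / 2).re
        - σ ^ 2 * ω ^ 2 / 2 := by
    rw [hzdef]
    simp only [Complex.div_ofNat_re, Complex.div_ofNat_im, pow_two, Complex.mul_re, Complex.sub_re, Complex.sub_im,
      Complex.mul_im, Complex.I_re, Complex.I_im, Complex.ofReal_re, Complex.ofReal_im,
      mul_zero, zero_mul, add_zero, zero_add, sub_zero, zero_sub, mul_one, one_mul]
    ring
  linarith [hmono]
end

section
/- Let α > 1, k ∈ ℝ, S₀ > 0 and define the damped call payoff g_α(x) = e^{-αx}·S₀·max(e^x - e^k, 0). Then g_α ∈ L¹(ℝ) and its Fourier transform satisfies ĝ_α(ω) = ∫_ℝ e^{iωx} g_α(x) dx = S₀·e^{(1 - α + iω)k} / ((1 + iω - α)(iω - α)) for all real ω. -/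
open MeasureTheory Complex Set Filter

lemma integrableOn_cexp_Ioi {c : ℂ} (hc : c.re < 0) (a : ℝ) :
    IntegrableOn (fun x : ℝ => Complex.exp (c * x)) (Set.Ioi a) := by
  have hb : (0:ℝ) < -c.re := by linarith
  have h := exp_neg_integrableOn_Ioi a hb
  refine h.mono' ?_ ?_
  · exact (Complex.continuous_exp.comp (continuous_const.mul Complex.continuous_ofReal)).aestronglyMeasurable
  · filter_upwards with x
    simp [Complex.norm_exp, neg_neg, mul_comm]

lemma integral_cexp_Ioi {c : ℂ} (hc : c.re < 0) (a : ℝ) :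
    ∫ x in Set.Ioi a, Complex.exp (c * x) = -Complex.exp (c * a) / c := by
  have hc0 : c ≠ 0 := fun h => by simp [h] at hc
  have hderiv : ∀ x ∈ Set.Ici a, HasDerivAt (fun x : ℝ => Complex.exp (c * x) / c)
      (Complex.exp (c * x)) x := by
    intro x _
    have h1 : HasDerivAt (fun z : ℂ => Complex.exp (c * z) / c) (Complex.exp (c * x)) (x : ℂ) := by
      have := ((Complex.hasDerivAt_exp (c * x)).comp (x:ℂ)
        ((hasDerivAt_id (x:ℂ)).const_mul c)).div_const c
      simpa [mul_comm, mul_div_assoc, mul_div_cancel_left₀ _ hc0] using this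
    exact h1.comp_ofReal
  have htend : Tendsto (fun x : ℝ => Complex.exp (c * x) / c) atTop (nhds 0) := by
    rw [tendsto_zero_iff_norm_tendsto_zero]
    have : (fun x : ℝ => ‖Complex.exp (c * x) / c‖) = fun x => Real.exp (c.re * x) / ‖c‖ := by
      funext x; simp [Complex.norm_exp]
    rw [this]
    have : Tendsto (fun x : ℝ => Real.exp (c.re * x)) atTop (nhds 0) :=
      Real.tendsto_exp_atBot.comp ((tendsto_const_mul_atBot_of_neg hc).2 tendsto_id)
    simpa using this.div_const ‖c‖
  have := integral_Ioi_of_hasDerivAt_of_tendsto' hderiv (integrableOn_cexp_Ioi hc a) htend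
  rw [this]; ring

theorem damped_call_integrable_and_fourier (α k S₀ : ℝ) (hα : 1 < α) (hS : 0 < S₀)
    (g : ℝ → ℝ)
    (hg : ∀ x : ℝ, g x = Real.exp (-α * x) * (S₀ * max (Real.exp x - Real.exp k) 0)) :
    Integrable g ∧
      ∀ ω : ℝ, (∫ x : ℝ, Complex.exp (Complex.I * (ω : ℂ) * (x : ℂ)) * (g x : ℂ)) =
        (S₀ : ℂ) * Complex.exp ((1 - (α : ℂ) + Complex.I * (ω : ℂ)) * (k : ℂ)) /
          ((1 + Complex.I * (ω : ℂ) - (α : ℂ)) * (Complex.I * (ω : ℂ) - (α : ℂ))) := by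
  have hg0 : ∀ x ≤ k, g x = 0 := by
    intro x hx
    rw [hg x, max_eq_right (by simp [Real.exp_le_exp.2 hx]), mul_zero, mul_zero]
  have hgval : ∀ x ∈ Set.Ioi k, g x =
      S₀ * Real.exp ((1 - α) * x) - S₀ * Real.exp k * Real.exp (-α * x) := by
    intro x hx
    rw [hg x, max_eq_left (by simp [Real.exp_le_exp.2 (le_of_lt hx)])]
    rw [show (1 - α) * x = -α * x + x by ring, Real.exp_add]
    ring
  have hind : g = Set.indicator (Set.Ioi k) g := by
    funext x
    by_cases hx : x ∈ Set.Ioi k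
    · rw [Set.indicator_of_mem hx]
    · rw [Set.indicator_of_notMem hx, hg0 x (not_lt.1 hx)]
  have hint1 : IntegrableOn (fun x : ℝ => S₀ * Real.exp ((1 - α) * x)) (Set.Ioi k) := by
    have := (exp_neg_integrableOn_Ioi k (by linarith : (0:ℝ) < α - 1)).const_mul S₀
    simpa [show ∀ x : ℝ, -(α - 1) * x = (1 - α) * x by intro x; ring, IntegrableOn] using this
  have hint2 : IntegrableOn (fun x : ℝ => S₀ * Real.exp k * Real.exp (-α * x)) (Set.Ioi k) := by
    exact (exp_neg_integrableOn_Ioi k (by linarith : (0:ℝ) < α)).const_mul _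
  have hgOn : IntegrableOn g (Set.Ioi k) :=
    IntegrableOn.congr_fun (hint1.sub hint2) (fun x hx => (hgval x hx).symm) measurableSet_Ioi
  have hgInt : Integrable g := by
    rw [hind]
    exact (integrable_indicator_iff measurableSet_Ioi).2 hgOn
  refine ⟨hgInt, fun ω => ?_⟩
  set c₁ : ℂ := 1 + Complex.I * (ω : ℂ) - (α : ℂ) with hc₁
  set c₂ : ℂ := Complex.I * (ω : ℂ) - (α : ℂ) with hc₂
  have hre1 : c₁.re < 0 := by simp [hc₁]; linarith
  have hre2 : c₂.re < 0 := by simp [hc₂]; linarith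
  have hc10 : c₁ ≠ 0 := fun h => by simp [h] at hre1
  have hc20 : c₂ ≠ 0 := fun h => by simp [h] at hre2
  have hsupp : (fun x : ℝ => Complex.exp (Complex.I * (ω : ℂ) * (x : ℂ)) * (g x : ℂ)) =
      Set.indicator (Set.Ioi k)
        (fun x : ℝ => Complex.exp (Complex.I * (ω : ℂ) * (x : ℂ)) * (g x : ℂ)) := by
    funext x
    by_cases hx : x ∈ Set.Ioi k
    · rw [Set.indicator_of_mem hx]
    · rw [Set.indicator_of_notMem hx, hg0 x (not_lt.1 hx)]; simp
  rw [hsupp, integral_indicator measurableSet_Ioi]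
  have heq : ∀ x ∈ Set.Ioi k,
      Complex.exp (Complex.I * (ω : ℂ) * (x : ℂ)) * (g x : ℂ) =
        (S₀ : ℂ) * Complex.exp (c₁ * x) - (S₀ : ℂ) * Real.exp k * Complex.exp (c₂ * x) := by
    intro x hx
    rw [hgval x hx]
    push_cast
    rw [hc₁, hc₂,
      show (1 + Complex.I * (ω:ℂ) - α) * (x:ℂ) = Complex.I * ω * x + ((1:ℂ) - α) * x by ring,
      show (Complex.I * (ω:ℂ) - α) * (x:ℂ) = Complex.I * ω * x + (-α : ℂ) * x by ring,
      Complex.exp_add, Complex.exp_add]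
    ring
  rw [setIntegral_congr_fun measurableSet_Ioi heq]
  rw [integral_sub (((integrableOn_cexp_Ioi hre1 k).const_mul _))
    ((integrableOn_cexp_Ioi hre2 k).const_mul _),
    integral_const_mul, integral_const_mul, integral_cexp_Ioi hre1 k, integral_cexp_Ioi hre2 k]
  have hkey : (Real.exp k : ℂ) * Complex.exp (c₂ * k) = Complex.exp (c₁ * k) := by
    rw [Complex.ofReal_exp, ← Complex.exp_add]
    congr 1
    rw [hc₁, hc₂]; push_cast; ring
  have hexp : Complex.exp ((1 - (α : ℂ) + Complex.I * (ω : ℂ)) * (k : ℂ)) =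
      Complex.exp (c₁ * k) := by congr 1; rw [hc₁]; ring
  rw [hexp, ← hkey]
  field_simp
  ring
end

section
/- Let a > 0, α ∈ ℝ, and suppose x ↦ e^{b|x|}·e^{-αx}·g(x) belongs to L²(ℝ) for every b < a, where g : ℝ → ℝ. Then the Fourier transform of g_α(x) = e^{-αx}g(x) extends to an analytic function on the strip {z ∈ ℂ : |Im z| < a}. -/
open MeasureTheory Complex

lemma pw_integrable_exp_neg_abs {c : ℝ} (hc : 0 < c) :
    Integrable (fun x : ℝ => Real.exp (-c * |x|)) := by
  have h1 : IntegrableOn (fun x : ℝ => Real.exp (-c * |x|)) (Set.Ici 0) := by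
    rw [integrableOn_Ici_iff_integrableOn_Ioi]
    refine (exp_neg_integrableOn_Ioi 0 hc).congr_fun ?_ measurableSet_Ioi
    intro x hx
    simp only [abs_of_pos (Set.mem_Ioi.mp hx)]
  have h_map_neg : (volume.restrict (Set.Ici (0:ℝ))).map Neg.neg
      = volume.restrict (Set.Iic 0) := by
    conv => rhs; rw [← Measure.map_neg_eq_self (volume : Measure ℝ),
      measurableEmbedding_neg.restrict_map]
    simp
  have h2 : IntegrableOn (fun x : ℝ => Real.exp (-c * |x|)) (Set.Iic 0) := by
    rw [IntegrableOn, ← h_map_neg, measurableEmbedding_neg.integrable_map_iff]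
    simpa [Function.comp_def, abs_neg, IntegrableOn] using h1
  rw [← integrableOn_univ, ← Set.Iic_union_Ici (a := (0:ℝ))]
  exact h2.union h1

lemma pw_memℒp_exp_neg_abs {c : ℝ} (hc : 0 < c) :
    MemLp (fun x : ℝ => Real.exp (-c * |x|)) 2 volume := by
  have hmeas : AEStronglyMeasurable (fun x : ℝ => Real.exp (-c * |x|)) volume :=
    (Real.continuous_exp.comp ((continuous_const.mul _root_.continuous_abs))).aestronglyMeasurable
  rw [memLp_two_iff_integrable_sq hmeas]
  have := pw_integrable_exp_neg_abs (c := 2 * c) (by linarith)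
  refine this.congr ?_
  refine Filter.Eventually.of_forall fun x => ?_
  simp only [sq, ← Real.exp_add]
  ring_nf

lemma pw_L1 {a α : ℝ} (g : ℝ → ℝ)
    (hg : ∀ b : ℝ, b < a →
      MemLp (fun x : ℝ => Real.exp (b * |x|) * (Real.exp (-α * x) * g x)) 2 volume)
    {c : ℝ} (hc : c < a) :
    Integrable (fun x : ℝ => Real.exp (c * |x|) * (Real.exp (-α * x) * g x)) := by
  set d : ℝ := (c + a) / 2 with hd
  have hda : d < a := by rw [hd]; linarith
  have hdc : 0 < d - c := by rw [hd]; linarith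
  have hφ : MemLp (fun x : ℝ => Real.exp (-(d - c) * |x|)) 2 volume :=
    pw_memℒp_exp_neg_abs hdc
  have hf := hg d hda
  have hmul : MemLp ((fun x : ℝ => Real.exp (-(d - c) * |x|)) •
      (fun x : ℝ => Real.exp (d * |x|) * (Real.exp (-α * x) * g x))) 1 volume := by
    exact hf.smul hφ
  rw [memLp_one_iff_integrable] at hmul
  refine hmul.congr (Filter.Eventually.of_forall fun x => ?_)
  simp only [Pi.smul_apply', smul_eq_mul]
  rw [← mul_assoc, ← Real.exp_add]
  ring_nf

lemma pw_aesm {a α : ℝ} (g : ℝ → ℝ)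
    (hg : ∀ b : ℝ, b < a →
      MemLp (fun x : ℝ => Real.exp (b * |x|) * (Real.exp (-α * x) * g x)) 2 volume) :
    AEStronglyMeasurable (fun x : ℝ => Real.exp (-α * x) * g x) volume := by
  have h := (hg (a - 1) (by linarith)).1
  have hcont : Continuous (fun x : ℝ => Real.exp (-(a - 1) * |x|)) :=
    Real.continuous_exp.comp (continuous_const.mul _root_.continuous_abs)
  have h2 := hcont.aestronglyMeasurable.mul h
  refine h2.congr (Filter.Eventually.of_forall fun x => ?_)
  simp only [Pi.mul_apply]
  rw [← mul_assoc, ← Real.exp_add]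
  ring_nf
  rw [Real.exp_zero, one_mul]

lemma pw_L2 {a α : ℝ} (g : ℝ → ℝ)
    (hg : ∀ b : ℝ, b < a →
      MemLp (fun x : ℝ => Real.exp (b * |x|) * (Real.exp (-α * x) * g x)) 2 volume)
    {c : ℝ} (hc : c < a) :
    Integrable (fun x : ℝ => |x| * (Real.exp (c * |x|) * |Real.exp (-α * x) * g x|)) := by
  set δ : ℝ := (a - c) / 2 with hδ
  have hδ0 : 0 < δ := by rw [hδ]; linarith
  have hca : c + δ < a := by rw [hδ]; linarith
  have hmaj := ((pw_L1 g hg hca).abs.const_mul δ⁻¹)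
  have hGmeas := pw_aesm g hg
  refine Integrable.mono' hmaj ?_ ?_
  · have hc1 : Continuous fun x : ℝ => |x| * Real.exp (c * |x|) :=
      _root_.continuous_abs.mul
        (Real.continuous_exp.comp (continuous_const.mul _root_.continuous_abs))
    exact (hc1.aestronglyMeasurable.mul hGmeas.norm).congr
      (Filter.Eventually.of_forall fun x => by
        simp only [Pi.mul_apply, Real.norm_eq_abs]; ring)
  · refine Filter.Eventually.of_forall fun x => ?_
    have hxle : |x| ≤ δ⁻¹ * Real.exp (δ * |x|) := by
      have h1 : δ * |x| ≤ Real.exp (δ * |x|) := by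
        have := Real.add_one_le_exp (δ * |x|)
        linarith
      rw [inv_mul_eq_div, le_div_iff₀ hδ0]
      nlinarith
    have hnn : (0:ℝ) ≤ Real.exp (c * |x|) * |Real.exp (-α * x) * g x| :=
      mul_nonneg (Real.exp_pos _).le (abs_nonneg _)
    rw [Real.norm_eq_abs, _root_.abs_of_nonneg (mul_nonneg (abs_nonneg x) hnn)]
    calc |x| * (Real.exp (c * |x|) * |Real.exp (-α * x) * g x|)
        ≤ (δ⁻¹ * Real.exp (δ * |x|)) * (Real.exp (c * |x|) * |Real.exp (-α * x) * g x|) :=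
          mul_le_mul_of_nonneg_right hxle hnn
      _ = δ⁻¹ * |Real.exp ((c + δ) * |x|) * (Real.exp (-α * x) * g x)| := by
          conv_rhs => rw [abs_mul, _root_.abs_of_nonneg (Real.exp_pos _).le, add_mul,
            Real.exp_add]
          ring

theorem paley_wiener_strip (a α : ℝ) (ha : 0 < a) (g : ℝ → ℝ)
    (hg : ∀ b : ℝ, b < a →
      MemLp (fun x : ℝ => Real.exp (b * |x|) * (Real.exp (-α * x) * g x)) 2 volume) :
    ∃ F : ℂ → ℂ,
      AnalyticOnNhd ℂ F {z : ℂ | |z.im| < a} ∧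
      ∀ ω : ℝ, F (ω : ℂ) =
        ∫ x : ℝ, Complex.exp (Complex.I * (ω : ℂ) * (x : ℂ)) *
          ((Real.exp (-α * x) * g x : ℝ) : ℂ) := by
  set G : ℝ → ℂ := fun x => ((Real.exp (-α * x) * g x : ℝ) : ℂ) with hGdef
  set F : ℂ → ℂ := fun z => ∫ x : ℝ, Complex.exp (Complex.I * z * (x : ℂ)) * G x with hFdef
  have hGm : AEStronglyMeasurable G volume :=
    Complex.continuous_ofReal.comp_aestronglyMeasurable (pw_aesm g hg)
  have hGnorm : ∀ x : ℝ, ‖G x‖ = |Real.exp (-α * x) * g x| := fun x => by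
    rw [hGdef, Complex.norm_real, Real.norm_eq_abs]
  have hopen : IsOpen {z : ℂ | |z.im| < a} :=
    isOpen_lt (_root_.continuous_abs.comp Complex.continuous_im) continuous_const
  have hcontz : ∀ z : ℂ, Continuous fun x : ℝ => Complex.exp (Complex.I * z * (x : ℂ)) :=
    fun z => Complex.continuous_exp.comp (continuous_const.mul Complex.continuous_ofReal)
  have hnorm : ∀ (z : ℂ) (x : ℝ), ‖Complex.exp (Complex.I * z * (x : ℂ))‖
      = Real.exp (-(z.im * x)) := by
    intro z x
    rw [Complex.norm_exp]
    congr 1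
    simp [Complex.mul_re, Complex.mul_im]
  have key : ∀ z₀ ∈ {z : ℂ | |z.im| < a}, ∃ c : ℂ, HasDerivAt F c z₀ := by
    intro z₀ hz₀
    simp only [Set.mem_setOf_eq] at hz₀
    set b' : ℝ := (|z₀.im| + a) / 2 with hb'
    set ε : ℝ := (a - |z₀.im|) / 2 with hε
    have hε0 : 0 < ε := by rw [hε]; linarith
    have hb'a : b' < a := by rw [hb']; linarith
    have him : ∀ z ∈ Metric.ball z₀ ε, |z.im| ≤ b' := by
      intro z hz
      rw [Metric.mem_ball, Complex.dist_eq] at hz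
      have h1 : |z.im - z₀.im| ≤ ‖z - z₀‖ := by
        simpa using Complex.abs_im_le_norm (z - z₀)
      have h2 : |z.im| ≤ |z₀.im| + |z.im - z₀.im| := by
        calc |z.im| = |z₀.im + (z.im - z₀.im)| := by ring_nf
          _ ≤ |z₀.im| + |z.im - z₀.im| := abs_add_le _ _
      rw [hb']
      have := h1.trans hz.le
      linarith
    have hexp_bound : ∀ z : ℂ, |z.im| ≤ b' → ∀ x : ℝ,
        Real.exp (-(z.im * x)) ≤ Real.exp (b' * |x|) := by
      intro z hzb x
      apply Real.exp_le_exp.2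
      calc -(z.im * x) ≤ |z.im * x| := neg_le_abs _
        _ = |z.im| * |x| := abs_mul _ _
        _ ≤ b' * |x| := mul_le_mul_of_nonneg_right hzb (abs_nonneg x)
    have hFz₀_int : Integrable (fun x : ℝ => Complex.exp (Complex.I * z₀ * (x : ℂ)) * G x) := by
      refine Integrable.mono' ((pw_L1 g hg hb'a).abs) ?_ ?_
      · exact (hcontz z₀).aestronglyMeasurable.mul hGm
      · refine Filter.Eventually.of_forall fun x => ?_
        rw [norm_mul, hnorm, hGnorm]
        calc Real.exp (-(z₀.im * x)) * |Real.exp (-α * x) * g x|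
            ≤ Real.exp (b' * |x|) * |Real.exp (-α * x) * g x| :=
              mul_le_mul_of_nonneg_right (hexp_bound z₀ (le_of_lt (by rw [hb']; linarith)) x)
                (abs_nonneg _)
          _ = |Real.exp (b' * |x|) * (Real.exp (-α * x) * g x)| := by
              conv_rhs => rw [abs_mul, _root_.abs_of_nonneg (Real.exp_pos _).le]
    have hmeas : ∀ᶠ z in nhds z₀, AEStronglyMeasurable
        (fun x : ℝ => Complex.exp (Complex.I * z * (x : ℂ)) * G x) volume :=
      Filter.Eventually.of_forall fun z => (hcontz z).aestronglyMeasurable.mul hGm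
    have hmeas' : AEStronglyMeasurable
        (fun x : ℝ => Complex.exp (Complex.I * z₀ * (x : ℂ)) * (Complex.I * (x : ℂ)) * G x)
        volume :=
      (((hcontz z₀).mul (continuous_const.mul Complex.continuous_ofReal)).aestronglyMeasurable).mul
        hGm
    have hbound : ∀ᵐ (x : ℝ) ∂volume, ∀ z ∈ Metric.ball z₀ ε,
        ‖Complex.exp (Complex.I * z * (x : ℂ)) * (Complex.I * (x : ℂ)) * G x‖
          ≤ |x| * (Real.exp (b' * |x|) * |Real.exp (-α * x) * g x|) := by
      refine Filter.Eventually.of_forall fun x => fun z hz => ?_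
      rw [norm_mul, norm_mul, hnorm, hGnorm]
      have h1 : ‖Complex.I * (x : ℂ)‖ = |x| := by simp
      rw [h1]
      calc Real.exp (-(z.im * x)) * |x| * |Real.exp (-α * x) * g x|
          ≤ Real.exp (b' * |x|) * |x| * |Real.exp (-α * x) * g x| := by
            refine mul_le_mul_of_nonneg_right
              (mul_le_mul_of_nonneg_right (hexp_bound z (him z hz) x) (abs_nonneg x))
              (abs_nonneg _)
        _ = |x| * (Real.exp (b' * |x|) * |Real.exp (-α * x) * g x|) := by ring
    have hdiff : ∀ᵐ (x : ℝ) ∂volume, ∀ z ∈ Metric.ball z₀ ε,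
        HasDerivAt (fun w : ℂ => Complex.exp (Complex.I * w * (x : ℂ)) * G x)
          (Complex.exp (Complex.I * z * (x : ℂ)) * (Complex.I * (x : ℂ)) * G x) z := by
      refine Filter.Eventually.of_forall fun x => fun z hz => ?_
      have hd : HasDerivAt (fun w : ℂ => Complex.I * w * (x : ℂ)) (Complex.I * (x : ℂ)) z := by
        simpa using ((hasDerivAt_id z).const_mul Complex.I).mul_const (x : ℂ)
      exact (hd.cexp).mul_const (G x)
    have main := hasDerivAt_integral_of_dominated_loc_of_deriv_le (μ := volume)
      (F' := fun (z : ℂ) (x : ℝ) =>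
        Complex.exp (Complex.I * z * (x : ℂ)) * (Complex.I * (x : ℂ)) * G x)
      (Metric.ball_mem_nhds z₀ hε0) hmeas hFz₀_int hmeas' hbound (pw_L2 g hg hb'a) hdiff
    exact ⟨_, main.2⟩
  refine ⟨F, ?_, fun ω => rfl⟩
  refine DifferentiableOn.analyticOnNhd ?_ hopen
  intro z hz
  obtain ⟨c, hc⟩ := key z hz
  exact hc.differentiableAt.differentiableWithinAt
end
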